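/- A Simple Temporal Network over a finite set of time-points, given as a finite set of constraints of the form y - x ≤ c with rational c, is consistent if and only if the associated weighted directed graph (edge x → y with weight c for each constraint y - x ≤ c) contains no negative-weight cycle. -/

import Mathlib

set_option linter.unusedSectionVars false


/-- A path in the constraint graph of an STN: each constraint `y - x ≤ c`,
recorded as the triple `(x, y, c)`, yields an edge `x → y` of weight `c`. -/
inductive STNPath {V : Type} (C : Finset (V × V × ℚ)) : V → V → List (V × V × ℚ) → Prop
  | nil (v : V) : STNPath C v v []
  | cons {u w v : V} (c : ℚ) (l : List (V × V × ℚ)) :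
      (u, w, c) ∈ C → STNPath C w v l → STNPath C u v ((u, w, c) :: l)

namespace SX
variable {V : Type} [DecidableEq V]

def wt (l : List (V × V × ℚ)) : ℚ := (l.map (fun e => e.2.2)).sum

noncomputable def dfun (C : Finset (V × V × ℚ)) : ℕ → V → ℚ
  | 0 => fun _ => 0
  | n + 1 => fun v =>
      (C.toList.filterMap (fun e =>
        if e.2.1 = v then some (dfun C n e.1 + e.2.2) else none)).foldr min (dfun C n v)

lemma dfun_zero (C : Finset (V × V × ℚ)) (v : V) : dfun C 0 v = 0 := rfl

lemma dfun_succ (C : Finset (V × V × ℚ)) (n : ℕ) (v : V) :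
    dfun C (n + 1) v = (C.toList.filterMap (fun e =>
        if e.2.1 = v then some (dfun C n e.1 + e.2.2) else none)).foldr min (dfun C n v) := rfl

lemma foldr_min_le_base : ∀ (l : List ℚ) (b : ℚ), l.foldr min b ≤ b := by
  intro l b; induction l with
  | nil => simp
  | cons a l ih => simpa using Or.inr ih

lemma foldr_min_le_mem {a : ℚ} : ∀ {l : List ℚ} (b : ℚ), a ∈ l → l.foldr min b ≤ a := by
  intro l
  induction l with
  | nil => simp
  | cons c l ih =>
    intro b h
    rcases List.mem_cons.1 h with h | h
    · subst h; simp
    · simpa using Or.inr (ih b h)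

lemma foldr_min_cases : ∀ (l : List ℚ) (b : ℚ), l.foldr min b = b ∨ l.foldr min b ∈ l := by
  intro l
  induction l with
  | nil => intro b; left; rfl
  | cons a l ih =>
    intro b
    rcases le_total a (l.foldr min b) with h | h
    · right; simp [min_eq_left h]
    · rcases ih b with h2 | h2
      · left; rw [List.foldr_cons, min_eq_right h, h2]
      · right; simp [min_eq_right h]; right; exact h2

lemma dfun_succ_le (C : Finset (V × V × ℚ)) (n : ℕ) (v : V) :
    dfun C (n + 1) v ≤ dfun C n v := by rw [dfun_succ]; exact foldr_min_le_base _ _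

lemma dfun_nonpos (C : Finset (V × V × ℚ)) (n : ℕ) (v : V) : dfun C n v ≤ 0 := by
  induction n with
  | zero => exact le_refl 0
  | succ n ih => exact (dfun_succ_le C n v).trans ih

lemma dfun_edge (C : Finset (V × V × ℚ)) (n : ℕ) {u v : V} {c : ℚ}
    (h : (u, v, c) ∈ C) : dfun C (n + 1) v ≤ dfun C n u + c := by
  rw [dfun_succ]
  apply foldr_min_le_mem
  apply List.mem_filterMap.2
  exact ⟨(u, v, c), Finset.mem_toList.2 h, by simp⟩

lemma wt_append (l1 l2 : List (V × V × ℚ)) : wt (l1 ++ l2) = wt l1 + wt l2 := by simp [wt]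

lemma path_append {C : Finset (V × V × ℚ)} {u w v : V} {l1 l2 : List (V × V × ℚ)}
    (h1 : STNPath C u w l1) (h2 : STNPath C w v l2) : STNPath C u v (l1 ++ l2) := by
  induction h1 with
  | nil => simpa using h2
  | cons c l hm hp ih => exact STNPath.cons c _ hm (ih h2)

lemma path_split {C : Finset (V × V × ℚ)} {v : V} : ∀ (l1 l2 : List (V × V × ℚ)) (u : V),
    STNPath C u v (l1 ++ l2) → ∃ w, STNPath C u w l1 ∧ STNPath C w v l2 := by
  intro l1
  induction l1 with
  | nil => intro l2 u h; exact ⟨u, STNPath.nil u, h⟩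
  | cons e l1 ih =>
    intro l2 u h
    cases h with
    | cons c l hm hp =>
      obtain ⟨w, h1, h2⟩ := ih l2 _ hp
      exact ⟨w, STNPath.cons c _ hm h1, h2⟩

lemma path_cons_inv {C : Finset (V × V × ℚ)} {u v : V} {e : V × V × ℚ} {l : List (V × V × ℚ)}
    (h : STNPath C u v (e :: l)) : e.1 = u ∧ e ∈ C ∧ STNPath C e.2.1 v l := by
  cases h with
  | cons c l hm hp => exact ⟨rfl, hm, hp⟩

lemma path_nil_inv {C : Finset (V × V × ℚ)} {u v : V} (h : STNPath C u v []) : u = v := by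
  cases h; rfl

lemma dfun_achieved (C : Finset (V × V × ℚ)) : ∀ (n : ℕ) (v : V),
    ∃ u l, STNPath C u v l ∧ l.length ≤ n ∧ wt l = dfun C n v := by
  intro n
  induction n with
  | zero => intro v; exact ⟨v, [], STNPath.nil v, by simp, rfl⟩
  | succ n ih =>
    intro v
    rcases foldr_min_cases (C.toList.filterMap (fun e =>
        if e.2.1 = v then some (dfun C n e.1 + e.2.2) else none)) (dfun C n v) with h | h
    · obtain ⟨u, l, hp, hl, hw⟩ := ih v
      refine ⟨u, l, hp, hl.trans (Nat.le_succ n), ?_⟩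
      rw [hw, dfun_succ]; exact h.symm
    · rw [dfun_succ]
      obtain ⟨e, he, hval⟩ := List.mem_filterMap.1 h
      by_cases hc : e.2.1 = v
      · subst hc
        simp only [if_true, Option.some.injEq] at hval
        obtain ⟨u, l, hp, hl, hw⟩ := ih e.1
        refine ⟨u, l ++ [e], ?_, ?_, ?_⟩
        · refine path_append hp ?_
          have hmem : (e.1, e.2.1, e.2.2) ∈ C := Finset.mem_toList.1 he
          exact STNPath.cons e.2.2 [] hmem (STNPath.nil e.2.1)
        · simp; omega
        · rw [wt_append, hw, ← hval]; simp [wt]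
      · simp [hc] at hval

lemma dfun_opt (C : Finset (V × V × ℚ)) : ∀ (n : ℕ) (l : List (V × V × ℚ)) (u v : V),
    STNPath C u v l → l.length ≤ n → dfun C n v ≤ wt l := by
  intro n
  induction n with
  | zero =>
    intro l u v hp hl
    have : l = [] := List.eq_nil_of_length_eq_zero (Nat.le_zero.1 hl)
    subst this
    simp [wt, dfun_zero]
  | succ n ih =>
    intro l u v hp hl
    rcases List.eq_nil_or_concat l with rfl | ⟨l', e, rfl⟩
    · have : wt ([] : List (V × V × ℚ)) = 0 := rfl
      rw [this]
      exact dfun_nonpos C (n+1) v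
    · rw [List.concat_eq_append] at hp hl ⊢
      obtain ⟨w, h1, h2⟩ := path_split l' [e] u hp
      obtain ⟨hfst, hmem, h3⟩ := path_cons_inv h2
      have hv : e.2.1 = v := path_nil_inv h3
      have hlen : l'.length ≤ n := by
        have := hl; simp at this; omega
      have hew : (w, v, e.2.2) ∈ C := by
        have : e = (e.1, e.2.1, e.2.2) := rfl
        rw [hfst, hv] at this
        rw [← this]; exact hmem
      calc dfun C (n+1) v ≤ dfun C n w + e.2.2 := dfun_edge C n hew
        _ ≤ wt l' + e.2.2 := by
            have := ih l' u w h1 hlen; linarith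
        _ = wt (l' ++ [e]) := by rw [wt_append]; simp [wt]

lemma dup_split {α β : Type*} (f : α → β) (b : β) :
    ∀ (l : List α), List.Sublist [b, b] (l.map f) →
      ∃ s e1 t e2 u, l = s ++ e1 :: t ++ e2 :: u ∧ f e1 = b ∧ f e2 = b := by
  intro l
  induction l with
  | nil => intro h; simp at h
  | cons a l ih =>
    intro h
    rw [List.map_cons] at h
    cases h with
    | cons _ h =>
      obtain ⟨s, e1, t, e2, u, rfl, h1, h2⟩ := ih h
      exact ⟨a :: s, e1, t, e2, u, rfl, h1, h2⟩
    | cons_cons _ h =>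
      have hb : f a ∈ l.map f := h.subset (List.mem_singleton_self _)
      obtain ⟨e2, he2, hf2⟩ := List.mem_map.1 hb
      obtain ⟨t, u, rfl⟩ := List.append_of_mem he2
      exact ⟨[], a, t, e2, u, rfl, rfl, hf2⟩

lemma shorten [Fintype V] {C : Finset (V × V × ℚ)}
    (hnc : ¬ ∃ (v : V) (l : List (V × V × ℚ)), STNPath C v v l ∧ l ≠ [] ∧
      (l.map (fun e => e.2.2)).sum < 0) :
    ∀ (n : ℕ) (l : List (V × V × ℚ)) (u v : V), l.length ≤ n → STNPath C u v l →
      ∃ l', STNPath C u v l' ∧ l'.length ≤ Fintype.card V ∧ wt l' ≤ wt l := by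
  intro n
  induction n with
  | zero =>
    intro l u v hl hp
    exact ⟨l, hp, by omega, le_refl _⟩
  | succ n ih =>
    intro l u v hl hp
    by_cases hcard : l.length ≤ Fintype.card V
    · exact ⟨l, hp, hcard, le_refl _⟩
    · push_neg at hcard
      have hnd : ¬ (l.map (fun e => e.1)).Nodup := by
        intro hnd
        have := hnd.length_le_card
        simp at this
        omega
      rw [List.nodup_iff_sublist] at hnd
      push_neg at hnd
      obtain ⟨x, hx⟩ := hnd
      obtain ⟨s, e1, t, e2, r, rfl, h1, h2⟩ := dup_split (fun e => e.1) x l hx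
      obtain ⟨a1, e1b, c1⟩ := e1
      obtain ⟨a2, e2b, c2⟩ := e2
      simp only at h1 h2
      obtain ⟨b, hfirst, htail⟩ :=
        path_split (s ++ (a1, e1b, c1) :: t) ((a2, e2b, c2) :: r) u hp
      obtain ⟨a, hsa, hcycle0⟩ := path_split s ((a1, e1b, c1) :: t) u hfirst
      obtain ⟨hf1, hm1, hp1⟩ := path_cons_inv hcycle0
      obtain ⟨hf2, hm2, hp2⟩ := path_cons_inv htail
      simp only at hf1 hf2
      have hab : a = b := by rw [← hf1, ← hf2, h1, h2]
      rw [← hab] at hcycle0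
      have hcycw : 0 ≤ c1 + wt t := by
        by_contra hneg
        push_neg at hneg
        exact hnc ⟨a, (a1, e1b, c1) :: t, hcycle0, by simp, by simpa [wt] using hneg⟩
      have hnew : STNPath C u v (s ++ (a2, e2b, c2) :: r) := by
        refine path_append hsa ?_
        rw [hab]
        exact htail
      have hlen : (s ++ (a2, e2b, c2) :: r).length ≤ n := by
        simp at hl ⊢; omega
      obtain ⟨l', hp', hl', hw'⟩ := ih (s ++ (a2, e2b, c2) :: r) u v hlen hnew
      refine ⟨l', hp', hl', ?_⟩
      have hw1 : wt (s ++ (a1, e1b, c1) :: t ++ (a2, e2b, c2) :: r)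
          = wt s + (c1 + wt t) + (c2 + wt r) := by
        simp [wt]
        ring
      have hw2 : wt (s ++ (a2, e2b, c2) :: r) = wt s + (c2 + wt r) := by
        simp only [wt, List.map_append, List.map_cons, List.sum_append, List.sum_cons]
      rw [hw1]
      rw [hw2] at hw'
      linarith

end SX

/-- An STN (finite set of difference constraints `y - x ≤ c` over
rational variables) is consistent iff its constraint graph contains no
negative-weight cycle (a nonempty path from some vertex back to itself of
negative total weight). -/
theorem stn_consistent_iff_no_negative_cycle {V : Type} [DecidableEq V]
    [Fintype V] (C : Finset (V × V × ℚ)) :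
    (∃ β : V → ℚ, ∀ x ∈ C, β x.2.1 - β x.1 ≤ x.2.2) ↔
      ¬ ∃ (v : V) (l : List (V × V × ℚ)), STNPath C v v l ∧ l ≠ [] ∧
        (l.map (fun e => e.2.2)).sum < 0 := by
  constructor
  · rintro ⟨β, hβ⟩ ⟨v, l, hp, hne, hneg⟩
    have key : ∀ (l : List (V × V × ℚ)) (u w : V), STNPath C u w l → β w - β u ≤ SX.wt l := by
      intro l u w hpath
      induction hpath with
      | nil => simp [SX.wt]
      | cons c l hm _ ih =>
        have hc := hβ _ hm
        simp only at hc
        simp only [SX.wt, List.map_cons, List.sum_cons] at ih ⊢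
        linarith
    have h0 := key l v v hp
    have heq : SX.wt l = (l.map (fun e => e.2.2)).sum := rfl
    rw [heq] at h0
    linarith
  · intro hnc
    refine ⟨SX.dfun C (Fintype.card V), ?_⟩
    rintro ⟨u, v, c⟩ hm
    simp only
    obtain ⟨w, l, hp, hl, hw⟩ := SX.dfun_achieved C (Fintype.card V + 1) v
    obtain ⟨l', hp', hl', hw'⟩ := SX.shorten hnc (Fintype.card V + 1) l w v hl hp
    have h1 : SX.dfun C (Fintype.card V) v ≤ SX.wt l' := SX.dfun_opt C (Fintype.card V) l' w v hp' hl'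
    have h2 : SX.dfun C (Fintype.card V + 1) v ≤ SX.dfun C (Fintype.card V) u + c :=
      SX.dfun_edge C (Fintype.card V) hm
    linarith
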